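/- In a crossover trial under simple randomization with no carry-over effect, the conditional expectation of Y1 - Y2 given A = 1 equals θ1 - τ, and the conditional expectation of Y2 - Y1 given A = 0 equals θ2 + τ, where θt = E(Yt^(1) - Yt^(0)) and τ = E(Y2^(0) - Y1^(0)). Consequently E[½((Y1-Y2)·1{A=1}/π1 + (Y2-Y1)·1{A=0}/π0)] = (θ1+θ2)/2. -/

import Mathlib

open MeasureTheory ProbabilityTheory

lemma crossover_key {Ω : Type*} [MeasurableSpace Ω] (μ : Measure Ω) [IsProbabilityMeasure μ]
    (A : Ω → ℝ) (hAm : Measurable A) (W : Ω → ℝ × ℝ × ℝ × ℝ)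
    (hindep : IndepFun A W μ) (c : ℝ)
    (f : ℝ × ℝ × ℝ × ℝ → ℝ) (hf : Measurable f)
    (hint : Integrable (fun ω => f (W ω)) μ) :
    ∫ ω, Set.indicator {ω' | A ω' = c} (fun _ => (1 : ℝ)) ω * f (W ω) ∂μ
      = (μ {ω | A ω = c}).toReal * ∫ ω, f (W ω) ∂μ := by
  set φ : ℝ → ℝ := Set.indicator {c} (fun _ => (1 : ℝ)) with hφdef
  have hφ : Measurable φ := measurable_const.indicator (measurableSet_singleton c)
  have hcomp : IndepFun (φ ∘ A) (f ∘ W) μ := hindep.comp hφ hf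
  have heq : ∀ ω, Set.indicator {ω' | A ω' = c} (fun _ => (1 : ℝ)) ω = φ (A ω) := by
    intro ω
    simp only [hφdef, Set.indicator, Set.mem_setOf_eq, Set.mem_singleton_iff]
  have hs : MeasurableSet {ω | A ω = c} := hAm (measurableSet_singleton c)
  have h1 : (∫ ω, Set.indicator {ω' | A ω' = c} (fun _ => (1 : ℝ)) ω * f (W ω) ∂μ)
      = (∫ ω, (φ ∘ A) ω ∂μ) * ∫ ω, (f ∘ W) ω ∂μ := by
    rw [← hcomp.integral_mul_eq_mul_integral ((hφ.comp hAm).aestronglyMeasurable) hint.aestronglyMeasurable]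
    exact integral_congr_ae (Filter.Eventually.of_forall fun ω => by simp only [heq ω]; rfl)
  have h2 : (∫ ω, (φ ∘ A) ω ∂μ) = (μ {ω | A ω = c}).toReal := by
    have : ∀ ω, (φ ∘ A) ω = Set.indicator {ω | A ω = c} (fun _ => (1 : ℝ)) ω :=
      fun ω => (heq ω).symm
    rw [integral_congr_ae (Filter.Eventually.of_forall this)]
    simpa [measureReal_def] using integral_indicator_const (1 : ℝ) hs
  rw [h1, h2]
  rfl

theorem stmt_3 {Ω : Type*} [MeasurableSpace Ω] (μ : Measure Ω) [IsProbabilityMeasure μ]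
    (A Y10 Y11 Y20 Y21 Y1 Y2 : Ω → ℝ)
    (hAm : Measurable A) (hAb : ∀ ω, A ω = 0 ∨ A ω = 1)
    (π1 π0 : ℝ) (hπ1 : π1 ∈ Set.Ioo (0 : ℝ) 1) (hπ0 : π0 = 1 - π1)
    (hA1 : μ {ω | A ω = 1} = ENNReal.ofReal π1)
    (hindep : IndepFun A (fun ω => (Y10 ω, Y11 ω, Y20 ω, Y21 ω)) μ)
    (hY10 : Integrable Y10 μ) (hY11 : Integrable Y11 μ)
    (hY20 : Integrable Y20 μ) (hY21 : Integrable Y21 μ)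
    (hcons1 : ∀ ω, A ω = 1 → Y1 ω = Y11 ω ∧ Y2 ω = Y20 ω)
    (hcons0 : ∀ ω, A ω = 0 → Y1 ω = Y10 ω ∧ Y2 ω = Y21 ω)
    (θ1 θ2 τ : ℝ)
    (hθ1 : θ1 = ∫ ω, (Y11 ω - Y10 ω) ∂μ)
    (hθ2 : θ2 = ∫ ω, (Y21 ω - Y20 ω) ∂μ)
    (hτ : τ = ∫ ω, (Y20 ω - Y10 ω) ∂μ) :
    (∫ ω, (Y1 ω - Y2 ω) ∂(μ[|{ω | A ω = 1}])) = θ1 - τ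
    ∧ (∫ ω, (Y2 ω - Y1 ω) ∂(μ[|{ω | A ω = 0}])) = θ2 + τ
    ∧ (∫ ω, (1 / 2) * ((Y1 ω - Y2 ω) * Set.indicator {ω' | A ω' = 1} (fun _ => (1 : ℝ)) ω / π1
          + (Y2 ω - Y1 ω) * Set.indicator {ω' | A ω' = 0} (fun _ => (1 : ℝ)) ω / π0) ∂μ)
        = (θ1 + θ2) / 2 := by
  obtain ⟨hπ1pos, hπ1lt⟩ := hπ1
  have hπ0pos : 0 < π0 := by rw [hπ0]; linarith
  set W : Ω → ℝ × ℝ × ℝ × ℝ := fun ω => (Y10 ω, Y11 ω, Y20 ω, Y21 ω) with hW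
  set s1 : Set Ω := {ω | A ω = 1} with hs1def
  set s0 : Set Ω := {ω | A ω = 0} with hs0def
  have hs1 : MeasurableSet s1 := hAm (measurableSet_singleton 1)
  have hs0 : MeasurableSet s0 := hAm (measurableSet_singleton 0)
  -- measures
  have hμ1 : (μ s1).toReal = π1 := by
    rw [hs1def, hA1, ENNReal.toReal_ofReal hπ1pos.le]
  have hs0c : s0 = s1ᶜ := by
    ext ω
    simp only [hs0def, hs1def, Set.mem_setOf_eq, Set.mem_compl_iff]
    rcases hAb ω with h | h <;> simp [h]
  have hμ0 : (μ s0).toReal = π0 := by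
    rw [hs0c, measure_compl hs1 (measure_ne_top μ s1), measure_univ, hA1,
      ENNReal.toReal_sub_of_le (by simpa [← hA1] using prob_le_one) ENNReal.one_ne_top]
    simp [ENNReal.toReal_ofReal hπ1pos.le, hπ0]
  -- target integrals
  have hf1m : Measurable (fun p : ℝ × ℝ × ℝ × ℝ => p.2.1 - p.2.2.1) := by fun_prop
  have hf0m : Measurable (fun p : ℝ × ℝ × ℝ × ℝ => p.2.2.2 - p.1) := by fun_prop
  have hint1 : Integrable (fun ω => (fun p : ℝ × ℝ × ℝ × ℝ => p.2.1 - p.2.2.1) (W ω)) μ :=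
    hY11.sub hY20
  have hint0 : Integrable (fun ω => (fun p : ℝ × ℝ × ℝ × ℝ => p.2.2.2 - p.1) (W ω)) μ :=
    hY21.sub hY10
  have hτval1 : (∫ ω, (Y11 ω - Y20 ω) ∂μ) = θ1 - τ := by
    rw [hθ1, hτ, integral_sub hY11 hY10, integral_sub hY20 hY10,
      integral_sub hY11 hY20]
    ring
  have hτval0 : (∫ ω, (Y21 ω - Y10 ω) ∂μ) = θ2 + τ := by
    rw [hθ2, hτ, integral_sub hY21 hY20, integral_sub hY20 hY10,
      integral_sub hY21 hY10]
    ring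
  have key1 : (∫ ω, Set.indicator s1 (fun _ => (1 : ℝ)) ω * (Y11 ω - Y20 ω) ∂μ)
      = π1 * (θ1 - τ) := by
    have := crossover_key μ A hAm W hindep 1
      (fun p : ℝ × ℝ × ℝ × ℝ => p.2.1 - p.2.2.1) hf1m hint1
    rw [← hs1def, hμ1] at this
    simpa [hW, hτval1] using this
  have key0 : (∫ ω, Set.indicator s0 (fun _ => (1 : ℝ)) ω * (Y21 ω - Y10 ω) ∂μ)
      = π0 * (θ2 + τ) := by
    have := crossover_key μ A hAm W hindep 0
      (fun p : ℝ × ℝ × ℝ × ℝ => p.2.2.2 - p.1) hf0m hint0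
    rw [← hs0def, hμ0] at this
    simpa [hW, hτval0] using this
  -- indicator identities
  have hind1 : ∀ ω, Set.indicator s1 (fun _ => (1 : ℝ)) ω * (Y11 ω - Y20 ω)
      = Set.indicator s1 (fun ω => Y11 ω - Y20 ω) ω := by
    intro ω; by_cases h : ω ∈ s1 <;> simp [Set.indicator_of_mem, Set.indicator_of_notMem, h]
  have hind0 : ∀ ω, Set.indicator s0 (fun _ => (1 : ℝ)) ω * (Y21 ω - Y10 ω)
      = Set.indicator s0 (fun ω => Y21 ω - Y10 ω) ω := by
    intro ω; by_cases h : ω ∈ s0 <;> simp [Set.indicator_of_mem, Set.indicator_of_notMem, h]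
  -- part 1
  have set1 : (∫ ω in s1, (Y1 ω - Y2 ω) ∂μ) = π1 * (θ1 - τ) := by
    rw [setIntegral_congr_fun hs1 (g := fun ω => Y11 ω - Y20 ω)
      (fun ω hω => by rw [(hcons1 ω hω).1, (hcons1 ω hω).2]),
      ← integral_indicator hs1]
    rw [← key1]
    exact integral_congr_ae (Filter.Eventually.of_forall fun ω => (hind1 ω).symm)
  have set0 : (∫ ω in s0, (Y2 ω - Y1 ω) ∂μ) = π0 * (θ2 + τ) := by
    rw [setIntegral_congr_fun hs0 (g := fun ω => Y21 ω - Y10 ω)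
      (fun ω hω => by rw [(hcons0 ω hω).1, (hcons0 ω hω).2]),
      ← integral_indicator hs0]
    rw [← key0]
    exact integral_congr_ae (Filter.Eventually.of_forall fun ω => (hind0 ω).symm)
  have cond1 : (∫ ω, (Y1 ω - Y2 ω) ∂(μ[|s1])) = θ1 - τ := by
    rw [ProbabilityTheory.cond, integral_smul_measure, set1, ENNReal.toReal_inv, hμ1, smul_eq_mul]
    field_simp
  have cond0 : (∫ ω, (Y2 ω - Y1 ω) ∂(μ[|s0])) = θ2 + τ := by
    rw [ProbabilityTheory.cond, integral_smul_measure, set0, ENNReal.toReal_inv, hμ0, smul_eq_mul]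
    field_simp
  refine ⟨cond1, cond0, ?_⟩
  -- part 3
  have hptw : ∀ ω, (1 / 2) * ((Y1 ω - Y2 ω) * Set.indicator s1 (fun _ => (1 : ℝ)) ω / π1
        + (Y2 ω - Y1 ω) * Set.indicator s0 (fun _ => (1 : ℝ)) ω / π0)
      = (1 / (2 * π1)) * Set.indicator s1 (fun ω => Y11 ω - Y20 ω) ω
        + (1 / (2 * π0)) * Set.indicator s0 (fun ω => Y21 ω - Y10 ω) ω := by
    intro ω
    rcases hAb ω with h | h
    · have h1 : ω ∉ s1 := by simp [hs1def, h]
      have h0 : ω ∈ s0 := h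
      obtain ⟨e1, e2⟩ := hcons0 ω h
      simp only [Set.indicator_of_mem h0, Set.indicator_of_notMem h1, e1, e2]
      field_simp
      ring
    · have h1 : ω ∈ s1 := h
      have h0 : ω ∉ s0 := by simp [hs0def, h]
      obtain ⟨e1, e2⟩ := hcons1 ω h
      simp only [Set.indicator_of_mem h1, Set.indicator_of_notMem h0, e1, e2]
      field_simp
      ring
  rw [integral_congr_ae (Filter.Eventually.of_forall hptw)]
  have hi1 : Integrable (fun ω => Set.indicator s1 (fun ω => Y11 ω - Y20 ω) ω) μ := by
    exact (hY11.sub hY20).indicator hs1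
  have hi0 : Integrable (fun ω => Set.indicator s0 (fun ω => Y21 ω - Y10 ω) ω) μ := by
    exact (hY21.sub hY10).indicator hs0
  rw [integral_add (hi1.const_mul _) (hi0.const_mul _), integral_const_mul, integral_const_mul]
  have e1 : (∫ ω, Set.indicator s1 (fun ω => Y11 ω - Y20 ω) ω ∂μ) = π1 * (θ1 - τ) := by
    rw [← key1]
    exact integral_congr_ae (Filter.Eventually.of_forall fun ω => (hind1 ω).symm)
  have e0 : (∫ ω, Set.indicator s0 (fun ω => Y21 ω - Y10 ω) ω ∂μ) = π0 * (θ2 + τ) := by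
    rw [← key0]
    exact integral_congr_ae (Filter.Eventually.of_forall fun ω => (hind0 ω).symm)
  rw [e1, e0]
  field_simp
  ring
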